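/- For any grid function v ∈ V_h^0, the discrete inner product satisfies (δ_x² δ_y² v, H_h v) ≥ 0. -/

import Mathlib

open Finset

noncomputable section

/-- A grid function on the `(M_x+1) × (M_y+1)` grid, represented as a total function
(only the values at indices `0 ≤ i ≤ M_x`, `0 ≤ j ≤ M_y` are relevant). -/
abbrev GridFn : Type := ℕ → ℕ → ℝ

/-- Spatial stepsize `h_x = 1/M_x`. -/
def hx (Mx : ℕ) : ℝ := ((Mx : ℝ))⁻¹

/-- Spatial stepsize `h_y = 1/M_y`. -/
def hy (My : ℕ) : ℝ := ((My : ℝ))⁻¹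

/-- Second-order difference in the x-direction:
`δ_x² v_{i,j} = (v_{i+1,j} − 2v_{i,j} + v_{i−1,j})/h_x²` (used for `1 ≤ i ≤ M_x−1`). -/
def dxx (Mx : ℕ) (v : GridFn) : GridFn := fun i j =>
  (v (i + 1) j - 2 * v i j + v (i - 1) j) / (hx Mx) ^ 2

/-- Second-order difference in the y-direction. -/
def dyy (My : ℕ) (v : GridFn) : GridFn := fun i j =>
  (v i (j + 1) - 2 * v i j + v i (j - 1)) / (hy My) ^ 2

/-- Compact operator `H_x`: `H_x v_{i,j} = v_{i,j} + (h_x²/12) δ_x² v_{i,j}` for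
`1 ≤ i ≤ M_x−1`, and `H_x v_{i,j} = v_{i,j}` for `i ∈ {0, M_x}`. -/
def Hcx (Mx : ℕ) (v : GridFn) : GridFn := fun i j =>
  if 1 ≤ i ∧ i ≤ Mx - 1 then v i j + (hx Mx) ^ 2 / 12 * dxx Mx v i j else v i j

/-- Compact operator `H_y`. -/
def Hcy (My : ℕ) (v : GridFn) : GridFn := fun i j =>
  if 1 ≤ j ∧ j ≤ My - 1 then v i j + (hy My) ^ 2 / 12 * dyy My v i j else v i j

/-- Compact operator `H_h = H_x H_y`. -/
def Hch (Mx My : ℕ) (v : GridFn) : GridFn := Hcx Mx (Hcy My v)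

/-- `Λ_h v = H_y(δ_x² v) + H_x(δ_y² v)` (at interior indices). -/
def Lamh (Mx My : ℕ) (v : GridFn) : GridFn := fun i j =>
  Hcy My (dxx Mx v) i j + Hcx Mx (dyy My v) i j

/-- Discrete L² inner product
`(v,w) = h_x h_y Σ_{i=1}^{M_x−1} Σ_{j=1}^{M_y−1} v_{i,j} w_{i,j}`. -/
def innp (Mx My : ℕ) (v w : GridFn) : ℝ :=
  hx Mx * hy My * ∑ i ∈ Icc 1 (Mx - 1), ∑ j ∈ Icc 1 (My - 1), v i j * w i j

/-- Discrete L² norm `‖v‖ = (v,v)^{1/2}`. -/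
def nrm (Mx My : ℕ) (v : GridFn) : ℝ := Real.sqrt (innp Mx My v v)

/-- Discrete maximum norm `‖v‖_∞ = max_{1≤i≤M_x−1, 1≤j≤M_y−1} |v_{i,j}|`. -/
def nrmInf (Mx My : ℕ) (v : GridFn) : ℝ :=
  ((Icc 1 (Mx - 1)) ×ˢ (Icc 1 (My - 1))).fold max 0 fun p => |v p.1 p.2|

/-- `‖δ_x v‖_x² = h_x h_y Σ_{i=1}^{M_x} Σ_{j=1}^{M_y−1} (δ_x v_{i−1/2,j})²`. -/
def nrmX2 (Mx My : ℕ) (v : GridFn) : ℝ :=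
  hx Mx * hy My * ∑ i ∈ Icc 1 Mx, ∑ j ∈ Icc 1 (My - 1),
    ((v i j - v (i - 1) j) / hx Mx) ^ 2

/-- `‖δ_y v‖_y² = h_x h_y Σ_{i=1}^{M_x−1} Σ_{j=1}^{M_y} (δ_y v_{i,j−1/2})²`. -/
def nrmY2 (Mx My : ℕ) (v : GridFn) : ℝ :=
  hx Mx * hy My * ∑ i ∈ Icc 1 (Mx - 1), ∑ j ∈ Icc 1 My,
    ((v i j - v i (j - 1)) / hy My) ^ 2

/-- Membership in `V_h^0`: a grid function vanishing on the boundary of the grid. -/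
def BZero (Mx My : ℕ) (v : GridFn) : Prop :=
  ∀ i ≤ Mx, ∀ j ≤ My, (i = 0 ∨ i = Mx ∨ j = 0 ∨ j = My) → v i j = 0

/-- Interior grid indices: `1 ≤ i ≤ M_x−1`, `1 ≤ j ≤ M_y−1`. -/
def interiorIdx (Mx My i j : ℕ) : Prop :=
  1 ≤ i ∧ i ≤ Mx - 1 ∧ 1 ≤ j ∧ j ≤ My - 1

/-- Time average `w̄^{n−1/2} = (w^n + w^{n−1})/2` of a sequence of grid functions. -/
def tbar (u : ℕ → GridFn) (n : ℕ) : GridFn := fun i j => (u n i j + u (n - 1) i j) / 2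

/-- Time difference `δ_t w^{n−1/2} = (w^n − w^{n−1})/τ` of a sequence of grid functions. -/
def tdiff (τ : ℝ) (u : ℕ → GridFn) (n : ℕ) : GridFn := fun i j =>
  (u n i j - u (n - 1) i j) / τ

/-- Extrapolation `l^{*,1} = l⁰`, `l^{*,n} = (3 l^{n−1} − l^{n−2})/2` for `n ≥ 2`. -/
def extrap (u : ℕ → GridFn) (n : ℕ) : GridFn :=
  if n = 1 then u 0 else fun i j => (3 * u (n - 1) i j - u (n - 2) i j) / 2


def Lxo (v : GridFn) : GridFn := fun i j => v (i + 1) j - 2 * v i j + v (i - 1) j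
def Lyo (v : GridFn) : GridFn := fun i j => v i (j + 1) - 2 * v i j + v i (j - 1)
def Dxo (v : GridFn) : GridFn := fun i j => v i j - v (i - 1) j
def Dyo (v : GridFn) : GridFn := fun i j => v i j - v i (j - 1)

lemma comm_LyLx (v : GridFn) : Lxo (Lyo v) = Lyo (Lxo v) := by
  funext i j; simp only [Lxo, Lyo]; ring

lemma comm_DyLx (v : GridFn) : Dyo (Lxo v) = Lxo (Dyo v) := by
  funext i j; simp only [Lxo, Dyo]; ring

lemma comm_DxLy (v : GridFn) : Dxo (Lyo v) = Lyo (Dxo v) := by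
  funext i j; simp only [Lyo, Dxo]; ring

lemma comm_DyDx (v : GridFn) : Dyo (Dxo v) = Dxo (Dyo v) := by
  funext i j; simp only [Dxo, Dyo]; ring

lemma sbp1 (M : ℕ) (hM : 2 ≤ M) (u z : ℕ → ℝ) (hz0 : z 0 = 0) (hzM : z M = 0) :
    ∑ i ∈ Icc 1 (M - 1), (u (i + 1) - 2 * u i + u (i - 1)) * z i
      = -∑ i ∈ Icc 1 M, (u i - u (i - 1)) * (z i - z (i - 1)) := by
  obtain ⟨N, rfl⟩ : ∃ N, M = N + 2 := ⟨M - 2, by omega⟩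
  have e1 : ∑ i ∈ Icc 1 (N + 2 - 1), (u (i + 1) - 2 * u i + u (i - 1)) * z i
      = ∑ k ∈ Finset.range (N + 1), (u (k + 2) - 2 * u (k + 1) + u k) * z (k + 1) := by
    rw [← Finset.Ico_add_one_right_eq_Icc, Finset.sum_Ico_eq_sum_range]
    refine Finset.sum_congr (by norm_num) fun k _ => ?_
    have h1 : 1 + k + 1 = k + 2 := by omega
    have h3 : 1 + k - 1 = k := by omega
    have h2 : 1 + k = k + 1 := by omega
    rw [h1, h3, h2]
  have e2 : ∑ i ∈ Icc 1 (N + 2), (u i - u (i - 1)) * (z i - z (i - 1))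
      = ∑ k ∈ Finset.range (N + 2), (u (k + 1) - u k) * (z (k + 1) - z k) := by
    rw [← Finset.Ico_add_one_right_eq_Icc, Finset.sum_Ico_eq_sum_range]
    refine Finset.sum_congr (by norm_num) fun k _ => ?_
    have h3 : 1 + k - 1 = k := by omega
    have h2 : 1 + k = k + 1 := by omega
    rw [h3, h2]
  rw [e1, e2]
  have key : ∀ k, (u (k + 2) - 2 * u (k + 1) + u k) * z (k + 1)
      = ((u (k + 1 + 1) - u (k + 1)) * z (k + 1) - (u (k + 1) - u k) * z k)
        - (u (k + 1) - u k) * (z (k + 1) - z k) := by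
    intro k
    have : k + 1 + 1 = k + 2 := by omega
    rw [this]; ring
  calc ∑ k ∈ Finset.range (N + 1), (u (k + 2) - 2 * u (k + 1) + u k) * z (k + 1)
      = ∑ k ∈ Finset.range (N + 1),
          (((fun m => (u (m + 1) - u m) * z m) (k + 1) - (fun m => (u (m + 1) - u m) * z m) k)
            - (u (k + 1) - u k) * (z (k + 1) - z k)) := by
        exact Finset.sum_congr rfl fun k _ => key k
    _ = ((u (N + 1 + 1) - u (N + 1)) * z (N + 1) - (u (0 + 1) - u 0) * z 0)
          - ∑ k ∈ Finset.range (N + 1), (u (k + 1) - u k) * (z (k + 1) - z k) := by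
        rw [Finset.sum_sub_distrib, Finset.sum_range_sub (fun m => (u (m + 1) - u m) * z m)]
    _ = -∑ k ∈ Finset.range (N + 2), (u (k + 1) - u k) * (z (k + 1) - z k) := by
        conv_rhs => rw [Finset.sum_range_succ]
        have hz2 : z (N + 1 + 1) = 0 := hzM
        rw [hz2, hz0]
        ring

lemma inv1 (M : ℕ) (hM : 2 ≤ M) (w : ℕ → ℝ) :
    ∑ i ∈ Icc 1 (M - 1), (w (i + 1) - 2 * w i + w (i - 1)) * (w (i + 1) - 2 * w i + w (i - 1))
      ≤ 4 * ∑ i ∈ Icc 1 M, (w i - w (i - 1)) * (w i - w (i - 1)) := by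
  obtain ⟨N, rfl⟩ : ∃ N, M = N + 2 := ⟨M - 2, by omega⟩
  have e1 : ∑ i ∈ Icc 1 (N + 2 - 1), (w (i + 1) - 2 * w i + w (i - 1)) * (w (i + 1) - 2 * w i + w (i - 1))
      = ∑ k ∈ Finset.range (N + 1), (w (k + 2) - 2 * w (k + 1) + w k) * (w (k + 2) - 2 * w (k + 1) + w k) := by
    rw [← Finset.Ico_add_one_right_eq_Icc, Finset.sum_Ico_eq_sum_range]
    refine Finset.sum_congr (by norm_num) fun k _ => ?_
    have h1 : 1 + k + 1 = k + 2 := by omega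
    have h3 : 1 + k - 1 = k := by omega
    have h2 : 1 + k = k + 1 := by omega
    rw [h1, h3, h2]
  have e2 : ∑ i ∈ Icc 1 (N + 2), (w i - w (i - 1)) * (w i - w (i - 1))
      = ∑ k ∈ Finset.range (N + 2), (w (k + 1) - w k) * (w (k + 1) - w k) := by
    rw [← Finset.Ico_add_one_right_eq_Icc, Finset.sum_Ico_eq_sum_range]
    refine Finset.sum_congr (by norm_num) fun k _ => ?_
    have h3 : 1 + k - 1 = k := by omega
    have h2 : 1 + k = k + 1 := by omega
    rw [h3, h2]
  rw [e1, e2]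
  set f : ℕ → ℝ := fun k => (w (k + 1) - w k) * (w (k + 1) - w k) with hf
  have hfnn : ∀ k, 0 ≤ f k := fun k => mul_self_nonneg _
  have step : ∀ k, (w (k + 2) - 2 * w (k + 1) + w k) * (w (k + 2) - 2 * w (k + 1) + w k)
      ≤ 2 * f (k + 1) + 2 * f k := by
    intro k
    simp only [hf]
    have h1 : k + 1 + 1 = k + 2 := by omega
    rw [h1]
    nlinarith [sq_nonneg (w (k + 2) - w k)]
  calc ∑ k ∈ Finset.range (N + 1), (w (k + 2) - 2 * w (k + 1) + w k) * (w (k + 2) - 2 * w (k + 1) + w k)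
      ≤ ∑ k ∈ Finset.range (N + 1), (2 * f (k + 1) + 2 * f k) :=
        Finset.sum_le_sum fun k _ => step k
    _ = 2 * ∑ k ∈ Finset.range (N + 1), f (k + 1) + 2 * ∑ k ∈ Finset.range (N + 1), f k := by
        rw [Finset.sum_add_distrib, Finset.mul_sum, Finset.mul_sum]
    _ ≤ 2 * ∑ k ∈ Finset.range (N + 2), f k + 2 * ∑ k ∈ Finset.range (N + 2), f k := by
        have hA : ∑ k ∈ Finset.range (N + 1), f (k + 1) ≤ ∑ k ∈ Finset.range (N + 2), f k := by
          have hs := Finset.sum_range_succ' f (N + 1)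
          have h0 : 0 ≤ f 0 := hfnn 0
          linarith
        have hB : ∑ k ∈ Finset.range (N + 1), f k ≤ ∑ k ∈ Finset.range (N + 2), f k :=
          Finset.sum_le_sum_of_subset_of_nonneg (Finset.range_subset_range.2 (by omega))
            (fun i _ _ => hfnn i)
        linarith
    _ = 4 * ∑ k ∈ Finset.range (N + 2), f k := by ring

lemma sbp_y (My : ℕ) (hMy : 2 ≤ My) (w z : GridFn) (i : ℕ)
    (h0 : z i 0 = 0) (hM : z i My = 0) :
    ∑ j ∈ Icc 1 (My - 1), Lyo w i j * z i j
      = -∑ j ∈ Icc 1 My, Dyo w i j * Dyo z i j := by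
  have := sbp1 My hMy (fun j => w i j) (fun j => z i j) h0 hM
  simpa [Lyo, Dyo] using this

lemma sbp_x (Mx : ℕ) (hMx : 2 ≤ Mx) (w z : GridFn) (j : ℕ)
    (h0 : z 0 j = 0) (hM : z Mx j = 0) :
    ∑ i ∈ Icc 1 (Mx - 1), Lxo w i j * z i j
      = -∑ i ∈ Icc 1 Mx, Dxo w i j * Dxo z i j := by
  have := sbp1 Mx hMx (fun i => w i j) (fun i => z i j) h0 hM
  simpa [Lxo, Dxo] using this

lemma inv_x (Mx : ℕ) (hMx : 2 ≤ Mx) (w : GridFn) (j : ℕ) :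
    ∑ i ∈ Icc 1 (Mx - 1), Lxo w i j * Lxo w i j
      ≤ 4 * ∑ i ∈ Icc 1 Mx, Dxo w i j * Dxo w i j := by
  have := inv1 Mx hMx (fun i => w i j)
  simpa [Lxo, Dxo] using this

lemma inv_y (My : ℕ) (hMy : 2 ≤ My) (w : GridFn) (i : ℕ) :
    ∑ j ∈ Icc 1 (My - 1), Lyo w i j * Lyo w i j
      ≤ 4 * ∑ j ∈ Icc 1 My, Dyo w i j * Dyo w i j := by
  have := inv1 My hMy (fun j => w i j)
  simpa [Lyo, Dyo] using this

lemma Hcy_interior (My : ℕ) (hMy0 : My ≠ 0) (v : GridFn) (k j : ℕ)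
    (hj : 1 ≤ j ∧ j ≤ My - 1) :
    Hcy My v k j = v k j + Lyo v k j / 12 := by
  have h0 : (My : ℝ) ≠ 0 := Nat.cast_ne_zero.2 hMy0
  simp only [Hcy, dyy, hy, Lyo, if_pos hj]
  field_simp

lemma Hch_interior (Mx My : ℕ) (hMx0 : Mx ≠ 0) (hMy0 : My ≠ 0) (v : GridFn) (i j : ℕ)
    (hi : 1 ≤ i ∧ i ≤ Mx - 1) (hj : 1 ≤ j ∧ j ≤ My - 1) :
    Hch Mx My v i j
      = v i j + Lxo v i j / 12 + Lyo v i j / 12 + Lxo (Lyo v) i j / 144 := by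
  have h0 : (Mx : ℝ) ≠ 0 := Nat.cast_ne_zero.2 hMx0
  simp only [Hch, Hcx, if_pos hi, dxx,
    Hcy_interior My hMy0 v (i + 1) j hj, Hcy_interior My hMy0 v i j hj,
    Hcy_interior My hMy0 v (i - 1) j hj, hx, Lxo]
  field_simp
  ring

lemma dxxdyy_eq (Mx My : ℕ) (hMx0 : Mx ≠ 0) (hMy0 : My ≠ 0) (v : GridFn) (i j : ℕ) :
    dxx Mx (dyy My v) i j = (Mx : ℝ) ^ 2 * (My : ℝ) ^ 2 * Lxo (Lyo v) i j := by
  have h0 : (Mx : ℝ) ≠ 0 := Nat.cast_ne_zero.2 hMx0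
  have h1 : (My : ℝ) ≠ 0 := Nat.cast_ne_zero.2 hMy0
  simp only [dxx, dyy, hx, hy, Lxo, Lyo]
  field_simp

/-- For any `v ∈ V_h^0`, `(δ_x² δ_y² v, H_h v) ≥ 0`. -/
theorem stmt9 (Mx My : ℕ) (hMx : 2 ≤ Mx) (hMy : 2 ≤ My) (v : GridFn)
    (hv : BZero Mx My v) :
    0 ≤ innp Mx My (dxx Mx (dyy My v)) (Hch Mx My v) := by
  have hMx0 : Mx ≠ 0 := by omega
  have hMy0 : My ≠ 0 := by omega
  have hMxR : (0:ℝ) ≤ (Mx:ℝ) := Nat.cast_nonneg _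
  have hMyR : (0:ℝ) ≤ (My:ℝ) := Nat.cast_nonneg _
  -- boundary facts
  have b0x : ∀ j ≤ My, v 0 j = 0 := fun j hj => hv 0 (by omega) j hj (Or.inl rfl)
  have bMx : ∀ j ≤ My, v Mx j = 0 := fun j hj => hv Mx le_rfl j hj (Or.inr (Or.inl rfl))
  have b0y : ∀ i ≤ Mx, v i 0 = 0 := fun i hi => hv i hi 0 (by omega) (Or.inr (Or.inr (Or.inl rfl)))
  have bMy : ∀ i ≤ Mx, v i My = 0 := fun i hi => hv i hi My le_rfl (Or.inr (Or.inr (Or.inr rfl)))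
  have hD0 : ∀ j ≤ My, Dyo v 0 j = 0 := fun j hj => by
    simp [Dyo, b0x j hj, b0x (j - 1) (by omega)]
  have hDM : ∀ j ≤ My, Dyo v Mx j = 0 := fun j hj => by
    simp [Dyo, bMx j hj, bMx (j - 1) (by omega)]
  have hLx0 : ∀ i, 1 ≤ i → i ≤ Mx - 1 → Lxo v i 0 = 0 := fun i hi1 hi2 => by
    simp [Lxo, b0y (i + 1) (by omega), b0y i (by omega), b0y (i - 1) (by omega)]
  have hLxM : ∀ i, 1 ≤ i → i ≤ Mx - 1 → Lxo v i My = 0 := fun i hi1 hi2 => by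
    simp [Lxo, bMy (i + 1) (by omega), bMy i (by omega), bMy (i - 1) (by omega)]
  have hLy0 : ∀ j, 1 ≤ j → j ≤ My - 1 → Lyo v 0 j = 0 := fun j hj1 hj2 => by
    simp [Lyo, b0x (j + 1) (by omega), b0x j (by omega), b0x (j - 1) (by omega)]
  have hLyM : ∀ j, 1 ≤ j → j ≤ My - 1 → Lyo v Mx j = 0 := fun j hj1 hj2 => by
    simp [Lyo, bMx (j + 1) (by omega), bMx j (by omega), bMx (j - 1) (by omega)]
  -- main abbreviations
  set G : ℝ := ∑ j ∈ Icc 1 My, ∑ i ∈ Icc 1 Mx, Dxo (Dyo v) i j * Dxo (Dyo v) i j with hGdef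
  set A1 : ℝ := ∑ i ∈ Icc 1 (Mx - 1), ∑ j ∈ Icc 1 (My - 1), Lxo (Lyo v) i j * v i j with hA1def
  set A2 : ℝ := ∑ i ∈ Icc 1 (Mx - 1), ∑ j ∈ Icc 1 (My - 1), Lxo (Lyo v) i j * Lxo v i j with hA2def
  set A3 : ℝ := ∑ i ∈ Icc 1 (Mx - 1), ∑ j ∈ Icc 1 (My - 1), Lxo (Lyo v) i j * Lyo v i j with hA3def
  set A4 : ℝ := ∑ i ∈ Icc 1 (Mx - 1), ∑ j ∈ Icc 1 (My - 1), Lxo (Lyo v) i j * Lxo (Lyo v) i j with hA4def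
  have hG : 0 ≤ G :=
    Finset.sum_nonneg fun j _ => Finset.sum_nonneg fun i _ => mul_self_nonneg _
  have hA4 : 0 ≤ A4 :=
    Finset.sum_nonneg fun i _ => Finset.sum_nonneg fun j _ => mul_self_nonneg _
  -- Step A: the inner product equals Mx*My*(A1 + A2/12 + A3/12 + A4/144)
  have hinn : innp Mx My (dxx Mx (dyy My v)) (Hch Mx My v)
      = (Mx : ℝ) * (My : ℝ) * (A1 + A2 / 12 + A3 / 12 + A4 / 144) := by
    have e : ∀ i ∈ Icc 1 (Mx - 1), ∀ j ∈ Icc 1 (My - 1),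
        dxx Mx (dyy My v) i j * Hch Mx My v i j
          = (Mx : ℝ) ^ 2 * (My : ℝ) ^ 2 *
            (Lxo (Lyo v) i j * v i j + Lxo (Lyo v) i j * Lxo v i j / 12
              + Lxo (Lyo v) i j * Lyo v i j / 12
              + Lxo (Lyo v) i j * Lxo (Lyo v) i j / 144) := by
      intro i hi j hj
      rw [mem_Icc] at hi hj
      rw [dxxdyy_eq Mx My hMx0 hMy0, Hch_interior Mx My hMx0 hMy0 v i j hi hj]
      ring
    have hsum : ∑ i ∈ Icc 1 (Mx - 1), ∑ j ∈ Icc 1 (My - 1),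
        dxx Mx (dyy My v) i j * Hch Mx My v i j
        = (Mx : ℝ) ^ 2 * (My : ℝ) ^ 2 * (A1 + A2 / 12 + A3 / 12 + A4 / 144) := by
      rw [Finset.sum_congr rfl fun i hi => Finset.sum_congr rfl fun j hj => e i hi j hj]
      simp only [← Finset.mul_sum]
      congr 1
      simp only [hA1def, hA2def, hA3def, hA4def, Finset.sum_add_distrib, ← Finset.sum_div]
    unfold innp
    rw [hsum]
    have h0 : (Mx : ℝ) ≠ 0 := Nat.cast_ne_zero.2 hMx0
    have h1 : (My : ℝ) ≠ 0 := Nat.cast_ne_zero.2 hMy0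
    simp only [hx, hy]
    field_simp
  -- Step B: A1 = G
  have hA1 : A1 = G := by
    have s1 : ∀ i ∈ Icc 1 (Mx - 1), ∑ j ∈ Icc 1 (My - 1), Lyo (Lxo v) i j * v i j
        = -∑ j ∈ Icc 1 My, Dyo (Lxo v) i j * Dyo v i j := by
      intro i hi
      rw [mem_Icc] at hi
      exact sbp_y My hMy (Lxo v) v i (b0y i (by omega)) (bMy i (by omega))
    have s2 : ∀ j ∈ Icc 1 My, ∑ i ∈ Icc 1 (Mx - 1), Lxo (Dyo v) i j * Dyo v i j
        = -∑ i ∈ Icc 1 Mx, Dxo (Dyo v) i j * Dxo (Dyo v) i j := by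
      intro j hj
      rw [mem_Icc] at hj
      exact sbp_x Mx hMx (Dyo v) (Dyo v) j (hD0 j hj.2) (hDM j hj.2)
    rw [hA1def, comm_LyLx, Finset.sum_congr rfl s1, Finset.sum_neg_distrib, comm_DyLx,
      Finset.sum_comm, Finset.sum_congr rfl s2, Finset.sum_neg_distrib, neg_neg, hGdef]
  -- Step C: A2 = -Sy with Sy ≤ 4G
  have hA2 : A2 = -∑ i ∈ Icc 1 (Mx - 1), ∑ j ∈ Icc 1 My,
      Dyo (Lxo v) i j * Dyo (Lxo v) i j := by
    have s1 : ∀ i ∈ Icc 1 (Mx - 1), ∑ j ∈ Icc 1 (My - 1), Lyo (Lxo v) i j * Lxo v i j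
        = -∑ j ∈ Icc 1 My, Dyo (Lxo v) i j * Dyo (Lxo v) i j := by
      intro i hi
      rw [mem_Icc] at hi
      exact sbp_y My hMy (Lxo v) (Lxo v) i (hLx0 i hi.1 hi.2) (hLxM i hi.1 hi.2)
    rw [hA2def, comm_LyLx, Finset.sum_congr rfl s1, Finset.sum_neg_distrib]
  have hSy : ∑ i ∈ Icc 1 (Mx - 1), ∑ j ∈ Icc 1 My,
      Dyo (Lxo v) i j * Dyo (Lxo v) i j ≤ 4 * G := by
    rw [comm_DyLx, Finset.sum_comm, hGdef, Finset.mul_sum]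
    exact Finset.sum_le_sum fun j _ => inv_x Mx hMx (Dyo v) j
  -- Step D: A3 = -Sx with Sx ≤ 4G
  have hA3 : A3 = -∑ j ∈ Icc 1 (My - 1), ∑ i ∈ Icc 1 Mx,
      Dxo (Lyo v) i j * Dxo (Lyo v) i j := by
    have s1 : ∀ j ∈ Icc 1 (My - 1), ∑ i ∈ Icc 1 (Mx - 1), Lxo (Lyo v) i j * Lyo v i j
        = -∑ i ∈ Icc 1 Mx, Dxo (Lyo v) i j * Dxo (Lyo v) i j := by
      intro j hj
      rw [mem_Icc] at hj
      exact sbp_x Mx hMx (Lyo v) (Lyo v) j (hLy0 j hj.1 hj.2) (hLyM j hj.1 hj.2)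
    rw [hA3def, Finset.sum_comm, Finset.sum_congr rfl s1, Finset.sum_neg_distrib]
  have hSx : ∑ j ∈ Icc 1 (My - 1), ∑ i ∈ Icc 1 Mx,
      Dxo (Lyo v) i j * Dxo (Lyo v) i j ≤ 4 * G := by
    rw [comm_DxLy, Finset.sum_comm]
    have step : ∀ i ∈ Icc 1 Mx, ∑ j ∈ Icc 1 (My - 1), Lyo (Dxo v) i j * Lyo (Dxo v) i j
        ≤ 4 * ∑ j ∈ Icc 1 My, Dyo (Dxo v) i j * Dyo (Dxo v) i j :=
      fun i _ => inv_y My hMy (Dxo v) i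
    calc ∑ i ∈ Icc 1 Mx, ∑ j ∈ Icc 1 (My - 1), Lyo (Dxo v) i j * Lyo (Dxo v) i j
        ≤ ∑ i ∈ Icc 1 Mx, 4 * ∑ j ∈ Icc 1 My, Dyo (Dxo v) i j * Dyo (Dxo v) i j :=
          Finset.sum_le_sum step
      _ = 4 * G := by
          rw [← Finset.mul_sum, comm_DyDx, hGdef, Finset.sum_comm]
  -- conclude
  rw [hinn]
  have hfinal : 0 ≤ A1 + A2 / 12 + A3 / 12 + A4 / 144 := by
    rw [hA1, hA2, hA3]
    linarith
  positivity
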